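/- Energy dissipation in the lane-based model: along solutions of the system ṡ_i = v_{i-1} - v_i (i = 2,…,n), v̇_1 = -k_1(v_1 - v*) - V'(s_2), v̇_i = -k_i(v_i - v*) + V'(s_i) - V'(s_{i+1}) (i = 2,…,n-1), v̇_n = -k_n(v_n - v*) + V'(s_n), where each k_i ≥ γ > 0, the Lyapunov function H̃(s, v) = ½Σ_{i=1}ⁿ(v_i - v*)² + Σ_{i=2}ⁿV(s_i) satisfies d/dt H̃ = -Σ_{i=1}ⁿ k_i(v_i - v*)² ≤ -γΣ_{i=1}ⁿ(v_i - v*)² ≤ 0. -/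

import Mathlib

open Set Filter Topology


lemma key11 (a b c : ℕ → ℝ) : ∀ n : ℕ, 2 ≤ n →
    (∑ i ∈ Finset.Icc 1 n, a i * (-(c i) * a i + (if i = 1 then (0:ℝ) else b i)
        - (if i = n then (0:ℝ) else b (i+1))))
      + ∑ i ∈ Finset.Icc 2 n, b i * (a (i-1) - a i)
    = -∑ i ∈ Finset.Icc 1 n, c i * a i ^ 2 := by
  intro n hn
  induction n, hn using Nat.le_induction with
  | base =>
    have h1 : Finset.Icc 1 2 = {1, 2} := rfl
    have h2 : Finset.Icc 2 2 = {2} := rfl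
    simp [h1, h2]
    ring
  | succ n hn ih =>
    rw [Finset.sum_Icc_succ_top (by omega : 1 ≤ n+1),
        Finset.sum_Icc_succ_top (by omega : 2 ≤ n+1),
        Finset.sum_Icc_succ_top (by omega : 1 ≤ n+1)]
    have hg : (∑ i ∈ Finset.Icc 1 n, a i * (-(c i) * a i + (if i = 1 then (0:ℝ) else b i)
          - (if i = n+1 then (0:ℝ) else b (i+1))))
        = (∑ i ∈ Finset.Icc 1 n, a i * (-(c i) * a i + (if i = 1 then (0:ℝ) else b i)
          - (if i = n then (0:ℝ) else b (i+1)))) - a n * b (n+1) := by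
      have : ∀ i ∈ Finset.Icc 1 n,
          a i * (-(c i) * a i + (if i = 1 then (0:ℝ) else b i)
            - (if i = n+1 then (0:ℝ) else b (i+1)))
          = a i * (-(c i) * a i + (if i = 1 then (0:ℝ) else b i)
            - (if i = n then (0:ℝ) else b (i+1)))
            + (if i = n then -(a n * b (n+1)) else 0) := by
        intro i hi
        simp only [Finset.mem_Icc] at hi
        by_cases h : i = n
        · subst h
          simp [show ¬ (i = i + 1) by omega]
          ring
        · simp [h, show ¬ (i = n + 1) by omega]
      rw [Finset.sum_congr rfl this, Finset.sum_add_distrib,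
        Finset.sum_ite_eq' (Finset.Icc 1 n) n]
      simp [Finset.mem_Icc, show 1 ≤ n by omega]
      ring
    rw [hg]
    have e1 : ¬ (n + 1 = 1) := by omega
    simp only [e1, if_false, if_true, Nat.add_sub_cancel, eq_self_iff_true]
    linarith [ih]


theorem stmt11 (n : ℕ) (hn : 2 ≤ n) (γ vs L : ℝ) (hγ : 0 < γ)
    (V Vp : ℝ → ℝ)
    (hV : ∀ x : ℝ, L < x → HasDerivAt V (Vp x) x)
    (v s : ℕ → ℝ → ℝ) (k : ℕ → ℝ → ℝ)
    (hk : ∀ i ∈ Finset.Icc 1 n, ∀ t : ℝ, γ ≤ k i t)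
    (hdom : ∀ i ∈ Finset.Icc 2 n, ∀ t : ℝ, L < s i t)
    (hs : ∀ i ∈ Finset.Icc 2 n, ∀ t : ℝ,
      HasDerivAt (s i) (v (i - 1) t - v i t) t)
    (hv1 : ∀ t : ℝ,
      HasDerivAt (v 1) (-(k 1 t) * (v 1 t - vs) - Vp (s 2 t)) t)
    (hvi : ∀ i, 2 ≤ i → i ≤ n - 1 → ∀ t : ℝ,
      HasDerivAt (v i) (-(k i t) * (v i t - vs) + Vp (s i t) - Vp (s (i + 1) t)) t)
    (hvn : ∀ t : ℝ,
      HasDerivAt (v n) (-(k n t) * (v n t - vs) + Vp (s n t)) t) :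
    ∀ t : ℝ,
      HasDerivAt
        (fun τ => (1 / 2) * ∑ i ∈ Finset.Icc 1 n, (v i τ - vs) ^ 2
          + ∑ i ∈ Finset.Icc 2 n, V (s i τ))
        (-(∑ i ∈ Finset.Icc 1 n, k i t * (v i t - vs) ^ 2)) t ∧
      -(∑ i ∈ Finset.Icc 1 n, k i t * (v i t - vs) ^ 2)
        ≤ -γ * ∑ i ∈ Finset.Icc 1 n, (v i t - vs) ^ 2 ∧
      -γ * ∑ i ∈ Finset.Icc 1 n, (v i t - vs) ^ 2 ≤ 0 := by
  intro t
  set a : ℕ → ℝ := fun i => v i t - vs with ha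
  set b : ℕ → ℝ := fun i => Vp (s i t) with hb
  set c : ℕ → ℝ := fun i => k i t with hc
  set W : ℕ → ℝ := fun i => -(c i) * a i + (if i = 1 then (0:ℝ) else b i)
    - (if i = n then (0:ℝ) else b (i+1)) with hW
  have hvW : ∀ i ∈ Finset.Icc 1 n, HasDerivAt (v i) (W i) t := by
    intro i hi
    simp only [Finset.mem_Icc] at hi
    rcases eq_or_ne i 1 with h1 | h1
    · subst h1
      have : W 1 = -(k 1 t) * (v 1 t - vs) - Vp (s 2 t) := by
        simp [hW, ha, hb, hc, show (1:ℕ) ≠ n by omega]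
      rw [this]; exact hv1 t
    · rcases eq_or_ne i n with h2 | h2
      · subst h2
        have : W i = -(k i t) * (v i t - vs) + Vp (s i t) := by
          simp [hW, ha, hb, hc, h1]
        rw [this]; exact hvn t
      · have : W i = -(k i t) * (v i t - vs) + Vp (s i t) - Vp (s (i+1) t) := by
          simp [hW, ha, hb, hc, h1, h2]
        rw [this]; exact hvi i (by omega) (by omega) t
  have hsum1 : HasDerivAt (fun τ => ∑ i ∈ Finset.Icc 1 n, (v i τ - vs) ^ 2)
      (∑ i ∈ Finset.Icc 1 n, 2 * a i * W i) t := by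
    have : ∀ i ∈ Finset.Icc 1 n,
        HasDerivAt (fun τ => (v i τ - vs) ^ 2) (2 * a i * W i) t := by
      intro i hi
      have := ((hvW i hi).sub_const vs).fun_pow 2
      simpa [ha] using this
    exact HasDerivAt.fun_sum this
  have hsum2 : HasDerivAt (fun τ => ∑ i ∈ Finset.Icc 2 n, V (s i τ))
      (∑ i ∈ Finset.Icc 2 n, b i * (a (i-1) - a i)) t := by
    have : ∀ i ∈ Finset.Icc 2 n,
        HasDerivAt (fun τ => V (s i τ)) (b i * (a (i-1) - a i)) t := by
      intro i hi
      have hcomp := (hV (s i t) (hdom i hi t)).comp t (hs i hi t)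
      have : b i * (a (i-1) - a i) = Vp (s i t) * (v (i-1) t - v i t) := by
        simp [ha, hb]
      rw [this]; exact hcomp
    exact HasDerivAt.fun_sum this
  have hD : HasDerivAt
      (fun τ => (1 / 2) * ∑ i ∈ Finset.Icc 1 n, (v i τ - vs) ^ 2
        + ∑ i ∈ Finset.Icc 2 n, V (s i τ))
      ((1/2) * (∑ i ∈ Finset.Icc 1 n, 2 * a i * W i)
        + ∑ i ∈ Finset.Icc 2 n, b i * (a (i-1) - a i)) t :=
    (hsum1.const_mul (1/2)).add hsum2
  have hEq : (1/2) * (∑ i ∈ Finset.Icc 1 n, 2 * a i * W i)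
        + ∑ i ∈ Finset.Icc 2 n, b i * (a (i-1) - a i)
      = -(∑ i ∈ Finset.Icc 1 n, k i t * (v i t - vs) ^ 2) := by
    have h1 : (1/2) * (∑ i ∈ Finset.Icc 1 n, 2 * a i * W i)
        = ∑ i ∈ Finset.Icc 1 n, a i * W i := by
      rw [Finset.mul_sum]
      exact Finset.sum_congr rfl fun i _ => by ring
    have h2 : (∑ i ∈ Finset.Icc 1 n, c i * a i ^ 2)
        = ∑ i ∈ Finset.Icc 1 n, k i t * (v i t - vs) ^ 2 := rfl
    rw [h1, ← h2]
    exact key11 a b c n hn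
  refine ⟨hEq ▸ hD, ?_, ?_⟩
  · have : ∑ i ∈ Finset.Icc 1 n, γ * (v i t - vs) ^ 2
        ≤ ∑ i ∈ Finset.Icc 1 n, k i t * (v i t - vs) ^ 2 :=
      Finset.sum_le_sum fun i hi =>
        mul_le_mul_of_nonneg_right (hk i hi t) (sq_nonneg _)
    rw [← Finset.mul_sum] at this
    linarith
  · have : (0:ℝ) ≤ ∑ i ∈ Finset.Icc 1 n, (v i t - vs) ^ 2 :=
      Finset.sum_nonneg fun i _ => sq_nonneg _
    nlinarith
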